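/- Assume Υ(k) ≥ 20. Then for any distinct i, j ∈ [k], ‖p^(i) − p^(j)‖² ≥ (1/min(vol(S_i), vol(S_j)))·(1/2 − 8/Υ(k)). -/

import Mathlib

open Finset
open scoped RealInnerProductSpace

/-- The volume of a vertex set: the sum of the degrees of its vertices. -/
noncomputable def gVol {V : Type*} (deg : V → ℝ) (S : Finset V) : ℝ := ∑ u ∈ S, deg u

/-- The total edge weight between two vertex sets. -/
noncomputable def gCut {V : Type*} (w : V → V → ℝ) (A B : Finset V) : ℝ :=
  ∑ u ∈ A, ∑ v ∈ B, w u v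

/-- The conductance of a vertex set. -/
noncomputable def gCond {V : Type*} [Fintype V] [DecidableEq V]
    (w : V → V → ℝ) (deg : V → ℝ) (S : Finset V) : ℝ :=
  gCut w S Sᶜ / min (gVol deg S) (gVol deg Sᶜ)

/-- `S : Fin k → Finset V` is a partition of `V` into `k` non-empty sets. -/
def IsPartition {V : Type*} [Fintype V] {k : ℕ} (S : Fin k → Finset V) : Prop :=
  (∀ i, (S i).Nonempty) ∧ (∀ i j, i ≠ j → Disjoint (S i) (S j)) ∧ ∀ v, ∃ i, v ∈ S i

/-- The vector `D^{1/2} χ_S`. -/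
noncomputable def indVec {n : ℕ} (deg : Fin n → ℝ) (S : Finset (Fin n)) :
    EuclideanSpace ℝ (Fin n) :=
  WithLp.toLp 2 (fun v => if v ∈ S then Real.sqrt (deg v) else 0)

/-- The normalised indicator vector `D^{1/2} χ_S / ‖D^{1/2} χ_S‖` of a cluster `S`. -/
noncomputable def gbarVec {n : ℕ} (deg : Fin n → ℝ) (S : Finset (Fin n)) :
    EuclideanSpace ℝ (Fin n) :=
  ‖indVec deg S‖⁻¹ • indVec deg S

set_option maxHeartbeats 2000000 in
/-- Approximate centres are far apart (Lemma 4.8). -/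
theorem centre_distance
    {n k : ℕ} (hk : 0 < k) (hkn : k < n)
    (w : Fin n → Fin n → ℝ)
    (hsymm : ∀ u v, w u v = w v u)
    (hnonneg : ∀ u v, 0 ≤ w u v)
    (deg : Fin n → ℝ) (hdeg : ∀ u, deg u = ∑ v, w u v)
    (hdegpos : ∀ u, 0 < deg u)
    -- the normalised Laplacian `N = I - D^{-1/2} A D^{-1/2}`
    (N : Matrix (Fin n) (Fin n) ℝ)
    (hN : ∀ u v, N u v =
      (if u = v then (1 : ℝ) else 0) - w u v / (Real.sqrt (deg u) * Real.sqrt (deg v)))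
    -- its eigenvalues `lam 0 ≤ … ≤ lam (n-1)` with orthonormal eigenvectors `f`
    (lam : Fin n → ℝ) (hlam : Monotone lam)
    (f : Fin n → EuclideanSpace ℝ (Fin n))
    (hf : Orthonormal ℝ f)
    (heig : ∀ i, N.mulVec (f i) = lam i • (f i))
    -- `S` is a partition attaining the `k`-way expansion `ρ(k)`
    (S : Fin k → Finset (Fin n)) (hS : IsPartition S)
    (rho : ℝ)
    (hrho : rho = ⨆ i, gCond w deg (S i))
    (hopt : ∀ T : Fin k → Finset (Fin n), IsPartition T → rho ≤ ⨆ i, gCond w deg (T i))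
    (hrhopos : 0 < rho)
    (hlampos : 0 < lam ⟨k, hkn⟩)
    -- `Υ(k) = λ_{k+1} / ρ(k)`
    (Upsilon : ℝ) (hU : Upsilon = lam ⟨k, hkn⟩ / rho)
    -- the normalised indicator vectors of the clusters
    (gbar : Fin k → EuclideanSpace ℝ (Fin n))
    (hgbar : ∀ i, gbar i = gbarVec deg (S i))
    -- the approximate cluster centres `p^(i)(j) = ⟨f_j, ḡ_i⟩ / √vol(S_i)`
    (p : Fin k → EuclideanSpace ℝ (Fin k))
    (hp : ∀ i j, p i j = ⟪f (Fin.castLE hkn.le j), gbar i⟫ / Real.sqrt (gVol deg (S i)))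
    (hU20 : 20 ≤ Upsilon) :
    ∀ i j : Fin k, i ≠ j →
      (1 / min (gVol deg (S i)) (gVol deg (S j))) * (1 / 2 - 8 / Upsilon) ≤
        ‖p i - p j‖ ^ 2 := by
  classical
  -- ## Generic bridges
  have hinner : ∀ x y : EuclideanSpace ℝ (Fin n), ⟪x, y⟫ = ∑ v, x v * y v := by
    intro x y; simp [PiLp.inner_apply, RCLike.inner_apply, conj_trivial]
    exact Finset.sum_congr rfl fun _ _ => mul_comm _ _
  have hnormsq : ∀ x : EuclideanSpace ℝ (Fin n), ‖x‖ ^ 2 = ∑ v, (x v) ^ 2 := by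
    intro x
    rw [← real_inner_self_eq_norm_sq, hinner]
    simp [sq]
  have hnormsqk : ∀ x : EuclideanSpace ℝ (Fin k), ‖x‖ ^ 2 = ∑ v, (x v) ^ 2 := by
    intro x
    rw [← real_inner_self_eq_norm_sq]
    simp only [PiLp.inner_apply, RCLike.inner_apply, conj_trivial, sq]
  have hmulvec : ∀ (x : Fin n → ℝ) (u : Fin n), N.mulVec x u = ∑ v, N u v * x v := by
    intro x u; rfl
  have hsumapply : ∀ (c : Fin n → ℝ) (g : Fin n → EuclideanSpace ℝ (Fin n)) (v : Fin n),
      (∑ l, c l • g l) v = ∑ l, c l * g l v := by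
    intro c g v
    have h1 : (∑ l, c l • g l) v = ∑ l, (c l • g l) v :=
      by rw [WithLp.ofLp_sum]; exact Finset.sum_apply v univ _
    rw [h1]
    exact Finset.sum_congr rfl fun l _ => rfl
  have hsq : ∀ u : Fin n, Real.sqrt (deg u) ^ 2 = deg u := fun u =>
    Real.sq_sqrt (hdegpos u).le
  have hne : ∀ u : Fin n, Real.sqrt (deg u) ≠ 0 := fun u =>
    (Real.sqrt_pos.2 (hdegpos u)).ne'
  -- ## Volume positivity and indicator vectors
  have hvolpos : ∀ m : Fin k, 0 < gVol deg (S m) := by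
    intro m
    obtain ⟨v, hv⟩ := hS.1 m
    exact Finset.sum_pos (fun u _ => hdegpos u) ⟨v, hv⟩
  have hindsq : ∀ m : Fin k, ‖indVec deg (S m)‖ ^ 2 = gVol deg (S m) := by
    intro m
    rw [hnormsq]
    calc ∑ v, (indVec deg (S m) v) ^ 2
        = ∑ v, (if v ∈ S m then deg v else 0) := by
          refine Finset.sum_congr rfl fun v _ => ?_
          by_cases h : v ∈ S m <;> simp [indVec, h, hsq v]
      _ = gVol deg (S m) := by
          rw [Finset.sum_ite_mem, Finset.univ_inter]; rfl
  have hindpos : ∀ m : Fin k, 0 < ‖indVec deg (S m)‖ := by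
    intro m
    have h1 := hindsq m
    have h2 := hvolpos m
    nlinarith [norm_nonneg (indVec deg (S m))]
  have hindnorm : ∀ m : Fin k, ‖indVec deg (S m)‖ = Real.sqrt (gVol deg (S m)) := by
    intro m
    rw [← hindsq m, Real.sqrt_sq (norm_nonneg _)]
  have hgbarv : ∀ (m : Fin k) (v : Fin n),
      gbar m v = (Real.sqrt (gVol deg (S m)))⁻¹ *
        (if v ∈ S m then Real.sqrt (deg v) else 0) := by
    intro m v
    rw [hgbar m]
    unfold gbarVec
    rw [hindnorm m]
    simp [indVec]
  have hnorm1 : ∀ m : Fin k, ‖gbar m‖ = 1 := by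
    intro m
    rw [hgbar m]
    unfold gbarVec
    rw [norm_smul, norm_inv, norm_norm, inv_mul_cancel₀ (hindpos m).ne']
  -- ## The quadratic form of N
  have hkey : ∀ (x : Fin n → ℝ) (u : Fin n), x u * N.mulVec x u
      = x u ^ 2 - ∑ v, x u * x v * (w u v / (Real.sqrt (deg u) * Real.sqrt (deg v))) := by
    intro x u
    rw [hmulvec x u]
    calc x u * ∑ v, N u v * x v
        = ∑ v, x u * (N u v * x v) := by rw [Finset.mul_sum]
      _ = ∑ v, ((if u = v then x u * x v else 0)
            - x u * x v * (w u v / (Real.sqrt (deg u) * Real.sqrt (deg v)))) := by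
          refine Finset.sum_congr rfl fun v _ => ?_
          rw [hN u v]
          by_cases h : u = v <;> simp [h] <;> ring
      _ = (∑ v, if u = v then x u * x v else 0)
            - ∑ v, x u * x v * (w u v / (Real.sqrt (deg u) * Real.sqrt (deg v))) := by
          rw [Finset.sum_sub_distrib]
      _ = x u ^ 2 - ∑ v, x u * x v * (w u v / (Real.sqrt (deg u) * Real.sqrt (deg v))) := by
          rw [Finset.sum_ite_eq univ u (fun v => x u * x v)]
          simp [sq]
  have hquadform : ∀ x : Fin n → ℝ,
      ∑ u, x u * N.mulVec x u =
        (1 / 2) * ∑ u, ∑ v, w u v *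
          (x u / Real.sqrt (deg u) - x v / Real.sqrt (deg v)) ^ 2 := by
    intro x
    have hA : ∑ u, ∑ v, w u v * (x u / Real.sqrt (deg u)) ^ 2 = ∑ u, x u ^ 2 := by
      refine Finset.sum_congr rfl fun u _ => ?_
      rw [← Finset.sum_mul, ← hdeg u, div_pow, hsq u]
      field_simp
      exact mul_div_cancel_left₀ _ (hdegpos u).ne'
    have hB : ∑ u, ∑ v, w u v * (x v / Real.sqrt (deg v)) ^ 2 = ∑ v, x v ^ 2 := by
      rw [Finset.sum_comm]
      refine Finset.sum_congr rfl fun v _ => ?_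
      rw [Finset.sum_congr rfl (fun u _ => by rw [hsymm u v]),
        ← Finset.sum_mul, ← hdeg v, div_pow, hsq v]
      field_simp
      exact mul_div_cancel_left₀ _ (hdegpos v).ne'
    have hexp : ∀ u v : Fin n,
        w u v * (x u / Real.sqrt (deg u) - x v / Real.sqrt (deg v)) ^ 2 =
          w u v * (x u / Real.sqrt (deg u)) ^ 2 + w u v * (x v / Real.sqrt (deg v)) ^ 2
            - 2 * (x u * x v * (w u v / (Real.sqrt (deg u) * Real.sqrt (deg v)))) := by
      intro u v
      field_simp
      ring
    have hrhs : ∑ u, ∑ v, w u v *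
          (x u / Real.sqrt (deg u) - x v / Real.sqrt (deg v)) ^ 2
        = (∑ u, x u ^ 2) + (∑ u, x u ^ 2)
            - 2 * ∑ u, ∑ v, x u * x v *
              (w u v / (Real.sqrt (deg u) * Real.sqrt (deg v))) := by
      calc ∑ u, ∑ v, w u v *
            (x u / Real.sqrt (deg u) - x v / Real.sqrt (deg v)) ^ 2
          = ∑ u, ∑ v, (w u v * (x u / Real.sqrt (deg u)) ^ 2
              + w u v * (x v / Real.sqrt (deg v)) ^ 2
              - 2 * (x u * x v * (w u v / (Real.sqrt (deg u) * Real.sqrt (deg v))))) :=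
            Finset.sum_congr rfl fun u _ => Finset.sum_congr rfl fun v _ => hexp u v
        _ = (∑ u, ∑ v, w u v * (x u / Real.sqrt (deg u)) ^ 2)
              + (∑ u, ∑ v, w u v * (x v / Real.sqrt (deg v)) ^ 2)
              - 2 * ∑ u, ∑ v, x u * x v *
                (w u v / (Real.sqrt (deg u) * Real.sqrt (deg v))) := by
            simp only [Finset.sum_add_distrib, Finset.sum_sub_distrib, ← Finset.mul_sum]
        _ = (∑ u, x u ^ 2) + (∑ u, x u ^ 2)
              - 2 * ∑ u, ∑ v, x u * x v *
                (w u v / (Real.sqrt (deg u) * Real.sqrt (deg v))) := by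
            rw [hA, hB]
    have hlhs : ∑ u, x u * N.mulVec x u
        = (∑ u, x u ^ 2) - ∑ u, ∑ v, x u * x v *
            (w u v / (Real.sqrt (deg u) * Real.sqrt (deg v))) := by
      rw [Finset.sum_congr rfl fun u _ => hkey x u, Finset.sum_sub_distrib]
    rw [hlhs]
    linarith [hrhs]
  have hQnonneg : ∀ x : Fin n → ℝ, 0 ≤ ∑ u, x u * N.mulVec x u := by
    intro x
    rw [hquadform x]
    have : 0 ≤ ∑ u, ∑ v, w u v *
        (x u / Real.sqrt (deg u) - x v / Real.sqrt (deg v)) ^ 2 :=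
      Finset.sum_nonneg fun u _ => Finset.sum_nonneg fun v _ =>
        mul_nonneg (hnonneg u v) (sq_nonneg _)
    linarith
  -- ## Eigenvalues are nonnegative
  have hlamnn : ∀ l : Fin n, 0 ≤ lam l := by
    intro l
    have hfl : ∑ u, (f l u) ^ 2 = 1 := by
      rw [← hnormsq (f l), hf.1 l]; norm_num
    have h1 : ∑ u, f l u * N.mulVec (f l) u = lam l := by
      rw [heig l]
      calc ∑ u, f l u * (lam l • f l) u = ∑ u, lam l * (f l u) ^ 2 := by
            refine Finset.sum_congr rfl fun u _ => ?_
            have : (lam l • f l) u = lam l * f l u := rfl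
            rw [this]; ring
        _ = lam l := by rw [← Finset.mul_sum, hfl, mul_one]
    rw [← h1]
    exact hQnonneg (f l)
  -- ## Rayleigh quotient of the indicator vectors
  have hray : ∀ m : Fin k, ∑ u, gbar m u * N.mulVec (gbar m) u
      = gCut w (S m) (S m)ᶜ / gVol deg (S m) := by
    intro m
    have hvol := hvolpos m
    have hsv : Real.sqrt (gVol deg (S m)) ≠ 0 := (Real.sqrt_pos.2 hvol).ne'
    have hc2 : ((Real.sqrt (gVol deg (S m)))⁻¹) ^ 2 = (gVol deg (S m))⁻¹ := by
      rw [← Real.sq_sqrt hvol.le, inv_pow]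
      rw [Real.sq_sqrt hvol.le, Real.sq_sqrt hvol.le]
    -- the double sum over the indicator vector
    have hdiag : ∑ u, ∑ v, (if u = v then gbar m u * gbar m v else 0)
        = (gVol deg (S m))⁻¹ * gVol deg (S m) := by
      calc ∑ u, ∑ v, (if u = v then gbar m u * gbar m v else 0)
          = ∑ u, gbar m u * gbar m u := by
            refine Finset.sum_congr rfl fun u _ => ?_
            rw [Finset.sum_ite_eq univ u (fun v => gbar m u * gbar m v)]
            simp
        _ = ∑ u, (gVol deg (S m))⁻¹ * (if u ∈ S m then deg u else 0) := by
            refine Finset.sum_congr rfl fun u _ => ?_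
            rw [hgbarv m u]
            by_cases h : u ∈ S m
            · simp only [h, if_true]
              have h2 : (Real.sqrt (gVol deg (S m)))⁻¹ * Real.sqrt (deg u)
                  * ((Real.sqrt (gVol deg (S m)))⁻¹ * Real.sqrt (deg u))
                  = ((Real.sqrt (gVol deg (S m)))⁻¹) ^ 2 * Real.sqrt (deg u) ^ 2 := by ring
              rw [h2, hc2, hsq u]
            · simp [h]
        _ = (gVol deg (S m))⁻¹ * gVol deg (S m) := by
            rw [← Finset.mul_sum, Finset.sum_ite_mem, Finset.univ_inter]
            rfl
    have hcross : ∑ u, ∑ v, gbar m u * gbar m v *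
          (w u v / (Real.sqrt (deg u) * Real.sqrt (deg v)))
        = (gVol deg (S m))⁻¹ * ∑ u ∈ S m, ∑ v ∈ S m, w u v := by
      calc ∑ u, ∑ v, gbar m u * gbar m v *
            (w u v / (Real.sqrt (deg u) * Real.sqrt (deg v)))
          = ∑ u, ∑ v, (gVol deg (S m))⁻¹ *
              (if u ∈ S m then (if v ∈ S m then w u v else 0) else 0) := by
            refine Finset.sum_congr rfl fun u _ => Finset.sum_congr rfl fun v _ => ?_
            rw [hgbarv m u, hgbarv m v]
            by_cases hu : u ∈ S m
            · by_cases hv : v ∈ S m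
              · simp only [hu, hv, if_true]
                have hdd : Real.sqrt (deg u) * Real.sqrt (deg v) ≠ 0 :=
                  mul_ne_zero (hne u) (hne v)
                have h1 : (Real.sqrt (gVol deg (S m)))⁻¹ * Real.sqrt (deg u) *
                    ((Real.sqrt (gVol deg (S m)))⁻¹ * Real.sqrt (deg v)) *
                    (w u v / (Real.sqrt (deg u) * Real.sqrt (deg v)))
                    = ((Real.sqrt (gVol deg (S m)))⁻¹) ^ 2 *
                      ((Real.sqrt (deg u) * Real.sqrt (deg v))
                        / (Real.sqrt (deg u) * Real.sqrt (deg v))) * w u v := by ring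
                rw [h1, div_self hdd, mul_one, hc2]
              · simp [hv]
            · simp [hu]
          _ = (gVol deg (S m))⁻¹ * ∑ u ∈ S m, ∑ v ∈ S m, w u v := by
            simp only [← Finset.mul_sum]
            congr 1
            calc ∑ u, ∑ v, (if u ∈ S m then (if v ∈ S m then w u v else 0) else 0)
                = ∑ u, (if u ∈ S m then ∑ v ∈ S m, w u v else 0) := by
                  refine Finset.sum_congr rfl fun u _ => ?_
                  by_cases hu : u ∈ S m
                  · simp only [hu, if_true]
                    rw [Finset.sum_ite_mem, Finset.univ_inter]
                  · simp [hu]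
              _ = ∑ u ∈ S m, ∑ v ∈ S m, w u v := by
                  rw [Finset.sum_ite_mem, Finset.univ_inter]
    have hcut : gVol deg (S m) - ∑ u ∈ S m, ∑ v ∈ S m, w u v = gCut w (S m) (S m)ᶜ := by
      unfold gCut gVol
      rw [← Finset.sum_sub_distrib]
      refine Finset.sum_congr rfl fun u hu => ?_
      have := Finset.sum_add_sum_compl (S m) (fun v => w u v)
      rw [hdeg u]
      linarith
    calc ∑ u, gbar m u * N.mulVec (gbar m) u
        = ∑ u, ((gbar m u) ^ 2 - ∑ v, gbar m u * gbar m v *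
            (w u v / (Real.sqrt (deg u) * Real.sqrt (deg v)))) :=
          Finset.sum_congr rfl fun u _ => hkey (gbar m) u
      _ = (∑ u, (gbar m u) ^ 2) - ∑ u, ∑ v, gbar m u * gbar m v *
            (w u v / (Real.sqrt (deg u) * Real.sqrt (deg v))) := by
          rw [Finset.sum_sub_distrib]
      _ = (gVol deg (S m))⁻¹ * gVol deg (S m) - (gVol deg (S m))⁻¹ *
            ∑ u ∈ S m, ∑ v ∈ S m, w u v := by
          rw [← hcross, ← hdiag]
          congr 1
          calc ∑ u, (gbar m u) ^ 2
              = ∑ u, gbar m u * gbar m u := by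
                refine Finset.sum_congr rfl fun u _ => sq (gbar m u) ▸ by ring
            _ = ∑ u, ∑ v, (if u = v then gbar m u * gbar m v else 0) := by
                refine Finset.sum_congr rfl fun u _ => ?_
                rw [Finset.sum_ite_eq univ u (fun v => gbar m u * gbar m v)]
                simp
      _ = gCut w (S m) (S m)ᶜ / gVol deg (S m) := by
          rw [← mul_sub, hcut, inv_mul_eq_div]
  -- ## Orthonormal basis of eigenvectors
  haveI : Nonempty (Fin n) := ⟨⟨0, hk.trans hkn⟩⟩
  have hcard : Fintype.card (Fin n) = Module.finrank ℝ (EuclideanSpace ℝ (Fin n)) := by simp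
  obtain ⟨b, hb⟩ : ∃ b : OrthonormalBasis (Fin n) ℝ (EuclideanSpace ℝ (Fin n)),
      ∀ l, b l = f l := by
    refine ⟨(basisOfOrthonormalOfCardEqFinrank hf hcard).toOrthonormalBasis
      (by rwa [coe_basisOfOrthonormalOfCardEqFinrank]), fun l => ?_⟩
    have h1 := congrFun ((basisOfOrthonormalOfCardEqFinrank hf hcard).coe_toOrthonormalBasis
      (by rwa [coe_basisOfOrthonormalOfCardEqFinrank])) l
    have h2 := congrFun (coe_basisOfOrthonormalOfCardEqFinrank hf hcard) l
    rw [h1, h2]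
  have hpars : ∀ x y : EuclideanSpace ℝ (Fin n), ∑ l, ⟪f l, x⟫ * ⟪f l, y⟫ = ⟪x, y⟫ := by
    intro x y
    calc ∑ l, ⟪f l, x⟫ * ⟪f l, y⟫ = ∑ l, ⟪x, b l⟫ * ⟪b l, y⟫ := by
          refine Finset.sum_congr rfl fun l _ => ?_
          rw [hb l, real_inner_comm (f l) x]
      _ = ⟪x, y⟫ := b.sum_inner_mul_inner x y
  have hexpand : ∀ m : Fin k, gbar m = ∑ l, ⟪f l, gbar m⟫ • f l := by
    intro m
    conv_lhs => rw [← b.sum_repr' (gbar m)]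
    exact Finset.sum_congr rfl fun l _ => by rw [hb l]
  -- ## Spectral form of the Rayleigh quotient
  have hmvpt : ∀ (m : Fin k) (u : Fin n),
      N.mulVec (gbar m) u = ∑ l, ⟪f l, gbar m⟫ * (lam l * f l u) := by
    intro m u
    rw [hmulvec (gbar m) u]
    calc ∑ v, N u v * gbar m v
        = ∑ v, N u v * ∑ l, ⟪f l, gbar m⟫ * f l v := by
          refine Finset.sum_congr rfl fun v _ => ?_
          congr 1
          conv_lhs => rw [hexpand m]
          exact hsumapply _ _ v
      _ = ∑ v, ∑ l, ⟪f l, gbar m⟫ * (N u v * f l v) := by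
          refine Finset.sum_congr rfl fun v _ => ?_
          rw [Finset.mul_sum]
          exact Finset.sum_congr rfl fun l _ => by ring
      _ = ∑ l, ∑ v, ⟪f l, gbar m⟫ * (N u v * f l v) := Finset.sum_comm
      _ = ∑ l, ⟪f l, gbar m⟫ * (lam l * f l u) := by
          refine Finset.sum_congr rfl fun l _ => ?_
          rw [← Finset.mul_sum, ← hmulvec (f l) u, heig l]
          rfl
  have hspec : ∀ m : Fin k, ∑ u, gbar m u * N.mulVec (gbar m) u
      = ∑ l, lam l * ⟪f l, gbar m⟫ ^ 2 := by
    intro m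
    calc ∑ u, gbar m u * N.mulVec (gbar m) u
        = ∑ u, ∑ l, ⟪f l, gbar m⟫ * lam l * (f l u * gbar m u) := by
          refine Finset.sum_congr rfl fun u _ => ?_
          rw [hmvpt m u, Finset.mul_sum]
          exact Finset.sum_congr rfl fun l _ => by ring
      _ = ∑ l, ∑ u, ⟪f l, gbar m⟫ * lam l * (f l u * gbar m u) := Finset.sum_comm
      _ = ∑ l, ⟪f l, gbar m⟫ * lam l * ⟪f l, gbar m⟫ := by
          refine Finset.sum_congr rfl fun l _ => ?_
          rw [← Finset.mul_sum, ← hinner (f l) (gbar m)]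
      _ = ∑ l, lam l * ⟪f l, gbar m⟫ ^ 2 := Finset.sum_congr rfl fun l _ => by ring
  -- ## Conductance bound
  have hcond : ∀ m m' : Fin k, m ≠ m' → gCut w (S m) (S m)ᶜ / gVol deg (S m) ≤ rho := by
    intro m m' hmm
    have hcutnn : 0 ≤ gCut w (S m) (S m)ᶜ :=
      Finset.sum_nonneg fun u _ => Finset.sum_nonneg fun v _ => hnonneg u v
    have hvolc : 0 < gVol deg ((S m)ᶜ) := by
      obtain ⟨v, hv⟩ := hS.1 m'
      have hvc : v ∈ (S m)ᶜ := Finset.mem_compl.2 fun hvm =>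
        (Finset.disjoint_left.1 (hS.2.1 m m' hmm) hvm) hv
      exact Finset.sum_pos (fun u _ => hdegpos u) ⟨v, hvc⟩
    have hminpos : 0 < min (gVol deg (S m)) (gVol deg ((S m)ᶜ)) := lt_min (hvolpos m) hvolc
    have h1 : gCut w (S m) (S m)ᶜ / gVol deg (S m) ≤ gCond w deg (S m) := by
      unfold gCond
      exact div_le_div_of_nonneg_left hcutnn hminpos (min_le_left _ _)
    have h2 : gCond w deg (S m) ≤ rho := by
      rw [hrho]
      exact le_ciSup (f := fun i => gCond w deg (S i))
        (Set.Finite.bddAbove (Set.finite_range _)) m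
    exact h1.trans h2
  -- ## Tail bound on the spectral coefficients
  have htail : ∀ m m' : Fin k, m ≠ m' →
      ∑ l ∈ univ.filter (fun l : Fin n => ¬ l.1 < k), ⟪f l, gbar m⟫ ^ 2
        ≤ rho / lam ⟨k, hkn⟩ := by
    intro m m' hmm
    have hQ : ∑ l, lam l * ⟪f l, gbar m⟫ ^ 2 ≤ rho := by
      rw [← hspec m, hray m]
      exact hcond m m' hmm
    have h1 : lam ⟨k, hkn⟩ * ∑ l ∈ univ.filter (fun l : Fin n => ¬ l.1 < k),
        ⟪f l, gbar m⟫ ^ 2 ≤ ∑ l, lam l * ⟪f l, gbar m⟫ ^ 2 := by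
      rw [Finset.mul_sum]
      refine le_trans (Finset.sum_le_sum ?_)
        (Finset.sum_le_sum_of_subset_of_nonneg (Finset.filter_subset _ _) ?_)
      · intro l hl
        have hkl : (⟨k, hkn⟩ : Fin n) ≤ l := by
          simp only [Finset.mem_filter] at hl
          exact Fin.le_def.2 (Nat.le_of_not_lt hl.2)
        exact mul_le_mul_of_nonneg_right (hlam hkl) (sq_nonneg _)
      · intro l _ _
        exact mul_nonneg (hlamnn l) (sq_nonneg _)
    rw [le_div_iff₀ hlampos, mul_comm]
    linarith
  -- ## The main estimate
  intro i j hij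
  have horth : ⟪gbar i, gbar j⟫ = 0 := by
    rw [hinner]
    refine Finset.sum_eq_zero fun v _ => ?_
    rw [hgbarv i v, hgbarv j v]
    by_cases hvi : v ∈ S i
    · have hvj : v ∉ S j := fun hvj =>
        (Finset.disjoint_left.1 (hS.2.1 i j hij) hvi) hvj
      simp [hvj]
    · simp [hvi]
  have hAi : ∑ l, ⟪f l, gbar i⟫ ^ 2 = 1 := by
    have h0 := hpars (gbar i) (gbar i)
    rw [real_inner_self_eq_norm_sq, hnorm1 i, one_pow] at h0
    calc ∑ l, ⟪f l, gbar i⟫ ^ 2 = ∑ l, ⟪f l, gbar i⟫ * ⟪f l, gbar i⟫ :=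
          Finset.sum_congr rfl fun l _ => by ring
      _ = 1 := h0
  have hAj : ∑ l, ⟪f l, gbar j⟫ ^ 2 = 1 := by
    have h0 := hpars (gbar j) (gbar j)
    rw [real_inner_self_eq_norm_sq, hnorm1 j, one_pow] at h0
    calc ∑ l, ⟪f l, gbar j⟫ ^ 2 = ∑ l, ⟪f l, gbar j⟫ * ⟪f l, gbar j⟫ :=
          Finset.sum_congr rfl fun l _ => by ring
      _ = 1 := h0
  have hAij : ∑ l, ⟪f l, gbar i⟫ * ⟪f l, gbar j⟫ = 0 := by
    rw [hpars (gbar i) (gbar j), horth]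
  set vi := gVol deg (S i) with hvidef
  set vj := gVol deg (S j) with hvjdef
  have hvip : 0 < vi := hvolpos i
  have hvjp : 0 < vj := hvolpos j
  have hsip : (0 : ℝ) < Real.sqrt vi := Real.sqrt_pos.2 hvip
  have hsjp : (0 : ℝ) < Real.sqrt vj := Real.sqrt_pos.2 hvjp
  have hsi2 : Real.sqrt vi ^ 2 = vi := Real.sq_sqrt hvip.le
  have hsj2 : Real.sqrt vj ^ 2 = vj := Real.sq_sqrt hvjp.le
  obtain ⟨bfun, hbapp⟩ : ∃ bf : Fin n → ℝ, ∀ l : Fin n,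
      bf l = ⟪f l, gbar i⟫ / Real.sqrt vi - ⟪f l, gbar j⟫ / Real.sqrt vj :=
    ⟨_, fun l => rfl⟩
  have hediv : ∀ (x y s t : ℝ), s ≠ 0 → t ≠ 0 →
      (x / s - y / t) ^ 2 = x ^ 2 / s ^ 2 + y ^ 2 / t ^ 2 - 2 / (s * t) * (x * y) := by
    intro x y s t hs ht
    field_simp
    ring
  -- total sum
  have htot : ∑ l, (bfun l) ^ 2 = 1 / vi + 1 / vj := by
    have hterm : ∀ l : Fin n, (bfun l) ^ 2 =
        ⟪f l, gbar i⟫ ^ 2 / vi + ⟪f l, gbar j⟫ ^ 2 / vj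
          - 2 / (Real.sqrt vi * Real.sqrt vj) * (⟪f l, gbar i⟫ * ⟪f l, gbar j⟫) := by
      intro l
      rw [hbapp l, hediv _ _ _ _ hsip.ne' hsjp.ne', hsi2, hsj2]
    rw [Finset.sum_congr rfl fun l _ => hterm l]
    rw [Finset.sum_sub_distrib, Finset.sum_add_distrib, ← Finset.sum_div, ← Finset.sum_div,
      ← Finset.mul_sum, hAi, hAj, hAij, mul_zero, sub_zero]
  -- head sum equals the norm of p i - p j
  have hnormp : ‖p i - p j‖ ^ 2 = ∑ j' : Fin k, (bfun (Fin.castLE hkn.le j')) ^ 2 := by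
    rw [hnormsqk]
    refine Finset.sum_congr rfl fun j' _ => ?_
    have h1 : (p i - p j) j' = p i j' - p j j' := rfl
    rw [h1, hp i j', hp j j', hbapp (Fin.castLE hkn.le j'), ← hvidef, ← hvjdef]
  -- split the sum
  have hheadeq : ∑ l ∈ univ.filter (fun l : Fin n => l.1 < k), (bfun l) ^ 2
      = ∑ j' : Fin k, (bfun (Fin.castLE hkn.le j')) ^ 2 := by
    refine Finset.sum_nbij'
      (fun l => if h : l.1 < k then (⟨l.1, h⟩ : Fin k) else ⟨0, hk⟩)
      (fun j' => Fin.castLE hkn.le j') ?_ ?_ ?_ ?_ ?_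
    · intro a _; exact Finset.mem_univ _
    · intro a _
      simp only [Finset.mem_filter, Finset.mem_univ, true_and]
      exact a.2
    · intro a ha
      simp only [Finset.mem_filter, Finset.mem_univ, true_and] at ha
      simp only [ha, dif_pos]
      rfl
    · intro a _
      simp only [Fin.castLE]
      rw [dif_pos a.2]
    · intro a ha
      simp only [Finset.mem_filter, Finset.mem_univ, true_and] at ha
      simp only [ha, dif_pos]
      congr 1
  have hsplit : ∑ l, (bfun l) ^ 2
      = (∑ j' : Fin k, (bfun (Fin.castLE hkn.le j')) ^ 2)
        + ∑ l ∈ univ.filter (fun l : Fin n => ¬ l.1 < k), (bfun l) ^ 2 := by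
    rw [← hheadeq, Finset.sum_filter_add_sum_filter_not]
  -- tail bound
  have hti := htail i j hij
  have htj := htail j i hij.symm
  have htb : ∑ l ∈ univ.filter (fun l : Fin n => ¬ l.1 < k), (bfun l) ^ 2
      ≤ (2 / vi + 2 / vj) * (rho / lam ⟨k, hkn⟩) := by
    calc ∑ l ∈ univ.filter (fun l : Fin n => ¬ l.1 < k), (bfun l) ^ 2
        ≤ ∑ l ∈ univ.filter (fun l : Fin n => ¬ l.1 < k),
            (2 / vi * ⟪f l, gbar i⟫ ^ 2 + 2 / vj * ⟪f l, gbar j⟫ ^ 2) := by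
          refine Finset.sum_le_sum fun l _ => ?_
          have h2 : (⟪f l, gbar i⟫ / Real.sqrt vi) ^ 2 = ⟪f l, gbar i⟫ ^ 2 / vi := by
            rw [div_pow, hsi2]
          have h3 : (⟪f l, gbar j⟫ / Real.sqrt vj) ^ 2 = ⟪f l, gbar j⟫ ^ 2 / vj := by
            rw [div_pow, hsj2]
          have h1 : (bfun l) ^ 2 ≤ 2 * (⟪f l, gbar i⟫ / Real.sqrt vi) ^ 2
              + 2 * (⟪f l, gbar j⟫ / Real.sqrt vj) ^ 2 := by
            rw [hbapp l]
            nlinarith [sq_nonneg (⟪f l, gbar i⟫ / Real.sqrt vi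
              + ⟪f l, gbar j⟫ / Real.sqrt vj)]
          rw [h2, h3] at h1
          calc (bfun l) ^ 2 ≤ 2 * (⟪f l, gbar i⟫ ^ 2 / vi)
                + 2 * (⟪f l, gbar j⟫ ^ 2 / vj) := h1
            _ = 2 / vi * ⟪f l, gbar i⟫ ^ 2 + 2 / vj * ⟪f l, gbar j⟫ ^ 2 := by ring
      _ = 2 / vi * (∑ l ∈ univ.filter (fun l : Fin n => ¬ l.1 < k), ⟪f l, gbar i⟫ ^ 2)
            + 2 / vj * (∑ l ∈ univ.filter (fun l : Fin n => ¬ l.1 < k), ⟪f l, gbar j⟫ ^ 2) := by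
          rw [Finset.sum_add_distrib, Finset.mul_sum, Finset.mul_sum]
      _ ≤ 2 / vi * (rho / lam ⟨k, hkn⟩) + 2 / vj * (rho / lam ⟨k, hkn⟩) := by
          have hposi : (0 : ℝ) ≤ 2 / vi := by positivity
          have hposj : (0 : ℝ) ≤ 2 / vj := by positivity
          exact add_le_add (mul_le_mul_of_nonneg_left hti hposi)
            (mul_le_mul_of_nonneg_left htj hposj)
      _ = (2 / vi + 2 / vj) * (rho / lam ⟨k, hkn⟩) := by ring
  have hrl : rho / lam ⟨k, hkn⟩ = 1 / Upsilon := by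
    rw [hU, one_div_div]
  -- put everything together
  have hlow : 1 / vi + 1 / vj - (2 / vi + 2 / vj) * (1 / Upsilon) ≤ ‖p i - p j‖ ^ 2 := by
    rw [hnormp]
    have := hsplit
    rw [htot] at this
    rw [hrl] at htb
    linarith
  have hU0 : (0 : ℝ) < Upsilon := lt_of_lt_of_le (by norm_num) hU20
  have hu20 : 1 / Upsilon ≤ 1 / 20 := by
    apply div_le_div_of_nonneg_left (by norm_num) (by norm_num) hU20
  have hu0 : (0 : ℝ) < 1 / Upsilon := by positivity
  have h8 : 8 / Upsilon = 8 * (1 / Upsilon) := by ring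
  have h2 : 2 / Upsilon = 2 * (1 / Upsilon) := by ring
  have hcase : ∀ x y : ℝ, 0 < x → 0 < y →
      (1 / x + 1 / y - (2 / x + 2 / y) * (1 / Upsilon) ≤ ‖p i - p j‖ ^ 2) →
      1 / x * (1 / 2 - 8 / Upsilon) ≤ ‖p i - p j‖ ^ 2 := by
    intro x y hx hy hl
    have hxi : (0 : ℝ) < 1 / x := by positivity
    have hxj : (0 : ℝ) < 1 / y := by positivity
    have step1 : 1 / x * (1 / 2 - 8 / Upsilon) ≤ 1 / x * (1 - 2 / Upsilon) := by
      apply mul_le_mul_of_nonneg_left _ hxi.le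
      rw [h8, h2]; linarith
    have step2 : 1 / x * (1 - 2 / Upsilon) ≤ (1 / x + 1 / y) * (1 - 2 / Upsilon) := by
      apply mul_le_mul_of_nonneg_right (by linarith)
      rw [h2]; linarith
    have step3 : (1 / x + 1 / y) * (1 - 2 / Upsilon)
        = 1 / x + 1 / y - (2 / x + 2 / y) * (1 / Upsilon) := by
      field_simp
    linarith
  rcases min_cases vi vj with ⟨hmin, _⟩ | ⟨hmin, _⟩ <;> rw [hmin]
  · exact hcase vi vj hvip hvjp hlow
  · exact hcase vj vi hvjp hvip (by linarith [hlow])
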